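/- Bernstein's inequality for sums of independent sub-exponential random variables: let X_1, ..., X_n be independent real random variables such that each X_i has finite mean mu_i and is sub-exponential with parameters (sigma_i, b_i). Set sigma = sqrt((1/n) * sum_{i=1}^n sigma_i^2) and b = max_{1<=i<=n} b_i. Then for every t >= 0, the probability P(sum_{i=1}^n X_i - sum_{i=1}^n mu_i >= t) is at most exp(-t^2/(2*n*sigma^2)) when 0 <= t <= n*sigma^2/b, and at most exp(-t/(2b)) when t > n*sigma^2/b; moreover the same two bounds hold for the lower tail P(sum_{i=1}^n mu_i - sum_{i=1}^n X_i >= t). -/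

import Mathlib

open MeasureTheory ProbabilityTheory Real

/-- Chernoff step: for `0 < lam < 1/B`, the tail is bounded by `exp (-lam*t + K*lam^2/2)`. -/
lemma bern_chernoff {Ω : Type*} [MeasurableSpace Ω] (μ : Measure Ω) [IsProbabilityMeasure μ]
    {n : ℕ} (X : Fin n → Ω → ℝ) (μᵢ σv : Fin n → ℝ) (B : ℝ)
    (hindep : iIndepFun X μ)
    (hmeas : ∀ i, Measurable (X i))
    (hsubexp : ∀ i, ∀ lam : ℝ, |lam| < 1 / B →
      Integrable (fun ω => exp (lam * (X i ω - μᵢ i))) μ ∧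
        ∫ ω, exp (lam * (X i ω - μᵢ i)) ∂μ ≤ exp (σv i ^ 2 * lam ^ 2 / 2))
    (t lam : ℝ) (hlam : 0 < lam) (hlamB : lam < 1 / B) :
    μ {ω | t ≤ (∑ i, X i ω) - ∑ i, μᵢ i}
      ≤ ENNReal.ofReal (exp (-(lam * t) + (∑ i, σv i ^ 2) * lam ^ 2 / 2)) := by
  have habs : |lam| < 1 / B := by rwa [abs_of_pos hlam]
  set Y : Fin n → Ω → ℝ := fun i ω => X i ω - μᵢ i with hY
  have hYmeas : ∀ i, Measurable (Y i) := fun i => (hmeas i).sub measurable_const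
  have hYindep : iIndepFun Y μ :=
    hindep.comp (fun i x => x - μᵢ i) (fun i => measurable_id.sub measurable_const)
  have hYint : ∀ i ∈ (Finset.univ : Finset (Fin n)),
      Integrable (fun ω => exp (lam * Y i ω)) μ := fun i _ => (hsubexp i lam habs).1
  have hint_sum : Integrable (fun ω => exp (lam * (∑ i, Y i) ω)) μ :=
    hYindep.integrable_exp_mul_sum hYmeas hYint
  have hmgf : mgf (∑ i, Y i) μ lam = ∏ i, mgf (Y i) μ lam :=
    hYindep.mgf_sum hYmeas Finset.univ
  have hmgf_le : mgf (∑ i, Y i) μ lam ≤ exp ((∑ i, σv i ^ 2) * lam ^ 2 / 2) := by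
    rw [hmgf]
    calc ∏ i, mgf (Y i) μ lam ≤ ∏ i, exp (σv i ^ 2 * lam ^ 2 / 2) := by
          apply Finset.prod_le_prod
          · intro i _; exact mgf_nonneg
          · intro i _; exact (hsubexp i lam habs).2
      _ = exp ((∑ i, σv i ^ 2) * lam ^ 2 / 2) := by
          rw [← Real.exp_sum]
          congr 1
          rw [Finset.sum_mul, Finset.sum_div]
  have hcher := measure_ge_le_exp_mul_mgf (μ := μ) (X := ∑ i, Y i) t hlam.le hint_sum
  have hsetEq : {ω | t ≤ (∑ i, X i ω) - ∑ i, μᵢ i} = {ω | t ≤ (∑ i, Y i) ω} := by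
    ext ω
    simp only [Set.mem_setOf_eq, Finset.sum_apply, hY, Finset.sum_sub_distrib]
  rw [hsetEq]
  have hbound : (μ {ω | t ≤ (∑ i, Y i) ω}).toReal
      ≤ exp (-(lam * t) + (∑ i, σv i ^ 2) * lam ^ 2 / 2) := by
    calc (μ {ω | t ≤ (∑ i, Y i) ω}).toReal ≤ exp (-lam * t) * mgf (∑ i, Y i) μ lam := hcher
      _ ≤ exp (-lam * t) * exp ((∑ i, σv i ^ 2) * lam ^ 2 / 2) := by
          apply mul_le_mul_of_nonneg_left hmgf_le (exp_nonneg _)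
      _ = exp (-(lam * t) + (∑ i, σv i ^ 2) * lam ^ 2 / 2) := by
          rw [← Real.exp_add]; ring_nf
  rw [← ENNReal.ofReal_toReal (measure_ne_top μ _)]
  exact ENNReal.ofReal_le_ofReal hbound

/-- Limit version: allows `lam0 ≤ 1/B`. -/
lemma bern_tail {Ω : Type*} [MeasurableSpace Ω] (μ : Measure Ω) [IsProbabilityMeasure μ]
    {n : ℕ} (X : Fin n → Ω → ℝ) (μᵢ σv : Fin n → ℝ) (B : ℝ)
    (hindep : iIndepFun X μ)
    (hmeas : ∀ i, Measurable (X i))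
    (hsubexp : ∀ i, ∀ lam : ℝ, |lam| < 1 / B →
      Integrable (fun ω => exp (lam * (X i ω - μᵢ i))) μ ∧
        ∫ ω, exp (lam * (X i ω - μᵢ i)) ∂μ ≤ exp (σv i ^ 2 * lam ^ 2 / 2))
    (t lam0 : ℝ) (hlam0 : 0 < lam0) (hlam0B : lam0 ≤ 1 / B) :
    μ {ω | t ≤ (∑ i, X i ω) - ∑ i, μᵢ i}
      ≤ ENNReal.ofReal (exp (-(lam0 * t) + (∑ i, σv i ^ 2) * lam0 ^ 2 / 2)) := by
  set K := ∑ i, σv i ^ 2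
  have hcont : ContinuousOn (fun lam : ℝ => ENNReal.ofReal (exp (-(lam * t) + K * lam ^ 2 / 2)))
      Set.univ := by
    apply Continuous.continuousOn
    exact ENNReal.continuous_ofReal.comp (Real.continuous_exp.comp (by continuity))
  have hne : (nhdsWithin lam0 (Set.Ioo 0 lam0)).NeBot :=
    (isLUB_Ioo hlam0).nhdsWithin_neBot (Set.nonempty_Ioo.mpr hlam0)
  have htend : Filter.Tendsto (fun lam : ℝ => ENNReal.ofReal (exp (-(lam * t) + K * lam ^ 2 / 2)))
      (nhdsWithin lam0 (Set.Ioo 0 lam0))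
      (nhds (ENNReal.ofReal (exp (-(lam0 * t) + K * lam0 ^ 2 / 2)))) := by
    have : Continuous (fun lam : ℝ => ENNReal.ofReal (exp (-(lam * t) + K * lam ^ 2 / 2))) :=
      ENNReal.continuous_ofReal.comp (Real.continuous_exp.comp (by continuity))
    exact (this.tendsto lam0).mono_left nhdsWithin_le_nhds
  refine ge_of_tendsto htend ?_
  filter_upwards [self_mem_nhdsWithin] with lam hlamm
  obtain ⟨h1, h2⟩ := hlamm
  exact bern_chernoff μ X μᵢ σv B hindep hmeas hsubexp t lam h1 (lt_of_lt_of_le h2 hlam0B)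

lemma bern_cases {Ω : Type*} [MeasurableSpace Ω] (μ : Measure Ω) [IsProbabilityMeasure μ]
    {n : ℕ} (X : Fin n → Ω → ℝ) (μᵢ σv : Fin n → ℝ) (B : ℝ) (hB : 0 < B)
    (hσ : ∀ i, 0 ≤ σv i)
    (hindep : iIndepFun X μ)
    (hmeas : ∀ i, Measurable (X i))
    (hsubexp : ∀ i, ∀ lam : ℝ, |lam| < 1 / B →
      Integrable (fun ω => exp (lam * (X i ω - μᵢ i))) μ ∧
        ∫ ω, exp (lam * (X i ω - μᵢ i)) ∂μ ≤ exp (σv i ^ 2 * lam ^ 2 / 2))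
    (t : ℝ) (ht : 0 ≤ t) :
    (t ≤ (∑ i, σv i ^ 2) / B →
        μ {ω | t ≤ (∑ i, X i ω) - ∑ i, μᵢ i}
          ≤ ENNReal.ofReal (exp (-(t ^ 2) / (2 * ∑ i, σv i ^ 2)))) ∧
    ((∑ i, σv i ^ 2) / B < t →
        μ {ω | t ≤ (∑ i, X i ω) - ∑ i, μᵢ i}
          ≤ ENNReal.ofReal (exp (-t / (2 * B)))) := by
  set K := ∑ i, σv i ^ 2 with hKdef
  have hK : 0 ≤ K := Finset.sum_nonneg fun i _ => sq_nonneg _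
  constructor
  · intro h1
    rcases ht.eq_or_lt with h0 | h0
    · subst h0
      have he : -((0:ℝ) ^ 2) / (2 * K) = 0 := by norm_num
      rw [he, Real.exp_zero, ENNReal.ofReal_one]
      exact prob_le_one
    · have hKpos : 0 < K := by
        by_contra h
        push_neg at h
        have : K = 0 := le_antisymm h hK
        rw [this] at h1
        simp at h1
        linarith
      have hlam0 : 0 < t / K := div_pos h0 hKpos
      have hlam0B : t / K ≤ 1 / B := by
        rw [div_le_div_iff₀ hKpos hB]
        have := (le_div_iff₀ hB).mp h1
        linarith
      have := bern_tail μ X μᵢ σv B hindep hmeas hsubexp t (t / K) hlam0 hlam0B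
      convert this using 3
      rw [← hKdef]
      field_simp
      ring
  · intro h2
    have htpos : 0 < t := lt_of_le_of_lt (div_nonneg hK hB.le) h2
    have hlam0 : 0 < 1 / B := one_div_pos.mpr hB
    have := bern_tail μ X μᵢ σv B hindep hmeas hsubexp t (1 / B) hlam0 le_rfl
    refine this.trans (ENNReal.ofReal_le_ofReal (exp_le_exp.mpr ?_))
    have hKt : K < t * B := by
      rw [div_lt_iff₀ hB] at h2; linarith
    rw [← hKdef]
    have h1 : K * (1 / B) ^ 2 / 2 ≤ t / (2 * B) := by
      have he : K * (1 / B) ^ 2 / 2 = (K / B) * (1 / (2 * B)) := by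
        field_simp
      have he2 : t / (2 * B) = t * (1 / (2 * B)) := by ring
      rw [he, he2]
      exact mul_le_mul_of_nonneg_right h2.le (by positivity)
    have h2' : -(1 / B * t) = -(t / B) := by field_simp
    have h3 : -(t / B) + t / (2 * B) = -t / (2 * B) := by field_simp; ring
    linarith


/-- Bernstein's inequality for sums of independent sub-exponential random variables.
Each `X i` has mean `μᵢ i` and is sub-exponential with parameters `(σ i, b i)`, i.e.
`E[exp(λ(X i - μᵢ i))] ≤ exp(σ i ^ 2 * λ ^ 2 / 2)` for `|λ| < 1/(b i)`.  With
`σ = √((1/n) ∑ σ i ^ 2)` and `bmax = max_i b i`, for every `t ≥ 0` the upper tail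
`P(∑ X i - ∑ μᵢ i ≥ t)` is bounded by `exp(-t²/(2 n σ²))` when `t ≤ n σ² / bmax`
and by `exp(-t/(2 bmax))` when `t > n σ² / bmax`, and the same bounds hold for the
lower tail `P(∑ μᵢ i - ∑ X i ≥ t)`. -/
theorem bernstein_inequality_subexponential
    {Ω : Type*} [MeasurableSpace Ω] (μ : Measure Ω) [IsProbabilityMeasure μ]
    (n : ℕ) (hn : 0 < n)
    (X : Fin n → Ω → ℝ) (μᵢ σv b : Fin n → ℝ)
    (hσ : ∀ i, 0 ≤ σv i) (hb : ∀ i, 0 < b i)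
    (hindep : iIndepFun X μ)
    (hmeas : ∀ i, Measurable (X i))
    (hint : ∀ i, Integrable (X i) μ)
    (hmean : ∀ i, μᵢ i = ∫ ω, X i ω ∂μ)
    (hsubexp : ∀ i, ∀ lam : ℝ, |lam| < 1 / b i →
      Integrable (fun ω => exp (lam * (X i ω - μᵢ i))) μ ∧
        ∫ ω, exp (lam * (X i ω - μᵢ i)) ∂μ ≤ exp (σv i ^ 2 * lam ^ 2 / 2)) :
    ∀ t : ℝ, 0 ≤ t →
      letI σ : ℝ := Real.sqrt ((1 / (n : ℝ)) * ∑ i, σv i ^ 2)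
      letI bmax : ℝ := Finset.univ.sup' (Finset.univ_nonempty_iff.mpr (Fin.pos_iff_nonempty.mp hn)) b
      ((t ≤ (n : ℝ) * σ ^ 2 / bmax →
          μ {ω | t ≤ (∑ i, X i ω) - ∑ i, μᵢ i}
            ≤ ENNReal.ofReal (exp (-(t ^ 2) / (2 * (n : ℝ) * σ ^ 2)))) ∧
        ((n : ℝ) * σ ^ 2 / bmax < t →
          μ {ω | t ≤ (∑ i, X i ω) - ∑ i, μᵢ i}
            ≤ ENNReal.ofReal (exp (-t / (2 * bmax))))) ∧
      ((t ≤ (n : ℝ) * σ ^ 2 / bmax →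
          μ {ω | t ≤ (∑ i, μᵢ i) - ∑ i, X i ω}
            ≤ ENNReal.ofReal (exp (-(t ^ 2) / (2 * (n : ℝ) * σ ^ 2)))) ∧
        ((n : ℝ) * σ ^ 2 / bmax < t →
          μ {ω | t ≤ (∑ i, μᵢ i) - ∑ i, X i ω}
            ≤ ENNReal.ofReal (exp (-t / (2 * bmax))))) := by

  intro t ht
  set B : ℝ := Finset.univ.sup' (Finset.univ_nonempty_iff.mpr (Fin.pos_iff_nonempty.mp hn)) b
    with hBdef
  have hBpos : 0 < B := (hb ⟨0, hn⟩).trans_le (Finset.le_sup' b (Finset.mem_univ _))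
  have hn' : (0:ℝ) < (n:ℝ) := Nat.cast_pos.mpr hn
  have hKnn : (0:ℝ) ≤ (1 / (n:ℝ)) * ∑ i, σv i ^ 2 := by
    apply mul_nonneg (by positivity)
    exact Finset.sum_nonneg fun i _ => sq_nonneg _
  have hred : (n:ℝ) * Real.sqrt ((1 / (n:ℝ)) * ∑ i, σv i ^ 2) ^ 2 = ∑ i, σv i ^ 2 := by
    rw [Real.sq_sqrt hKnn]
    field_simp
  have hred2 : 2 * (n:ℝ) * Real.sqrt ((1 / (n:ℝ)) * ∑ i, σv i ^ 2) ^ 2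
      = 2 * ∑ i, σv i ^ 2 := by
    rw [mul_assoc, hred]
  have hsubB : ∀ i, ∀ lam : ℝ, |lam| < 1 / B →
      Integrable (fun ω => exp (lam * (X i ω - μᵢ i))) μ ∧
        ∫ ω, exp (lam * (X i ω - μᵢ i)) ∂μ ≤ exp (σv i ^ 2 * lam ^ 2 / 2) := by
    intro i lam h
    refine hsubexp i lam (h.trans_le ?_)
    exact one_div_le_one_div_of_le (hb i) (Finset.le_sup' b (Finset.mem_univ i))
  simp only [hred, hred2]
  refine ⟨bern_cases μ X μᵢ σv B hBpos hσ hindep hmeas hsubB t ht, ?_⟩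
  -- lower tail: apply to the negated variables
  set X' : Fin n → Ω → ℝ := fun i ω => -X i ω with hX'
  set μ' : Fin n → ℝ := fun i => -μᵢ i with hμ'
  have hindep' : iIndepFun X' μ :=
    hindep.comp (fun _ => fun x : ℝ => -x) (fun _ => measurable_neg)
  have hmeas' : ∀ i, Measurable (X' i) := fun i => (hmeas i).neg
  have hsub' : ∀ i, ∀ lam : ℝ, |lam| < 1 / B →
      Integrable (fun ω => exp (lam * (X' i ω - μ' i))) μ ∧
        ∫ ω, exp (lam * (X' i ω - μ' i)) ∂μ ≤ exp (σv i ^ 2 * lam ^ 2 / 2) := by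
    intro i lam h
    have h' : |(-lam)| < 1 / B := by rwa [abs_neg]
    have hthis := hsubB i (-lam) h'
    have hfe : (fun ω => exp (lam * (X' i ω - μ' i)))
        = fun ω => exp ((-lam) * (X i ω - μᵢ i)) := by
      funext ω
      congr 1
      simp only [hX', hμ']
      ring
    refine ⟨hfe ▸ hthis.1, ?_⟩
    have hsq : σv i ^ 2 * (-lam) ^ 2 / 2 = σv i ^ 2 * lam ^ 2 / 2 := by ring
    calc ∫ ω, exp (lam * (X' i ω - μ' i)) ∂μ
        = ∫ ω, exp ((-lam) * (X i ω - μᵢ i)) ∂μ := by rw [hfe]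
      _ ≤ exp (σv i ^ 2 * (-lam) ^ 2 / 2) := hthis.2
      _ = exp (σv i ^ 2 * lam ^ 2 / 2) := by rw [hsq]
  have hlow := bern_cases μ X' μ' σv B hBpos hσ hindep' hmeas' hsub' t ht
  have hsetEq : {ω | t ≤ (∑ i, X' i ω) - ∑ i, μ' i}
      = {ω | t ≤ (∑ i, μᵢ i) - ∑ i, X i ω} := by
    ext ω
    simp only [Set.mem_setOf_eq, hX', hμ', Finset.sum_neg_distrib]
    constructor <;> intro hh <;> linarith
  rwa [hsetEq] at hlow
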